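/- Distribution relation for q-Euler polynomials: let d be an odd positive integer. With E_{n,q}(x) := (1+q)(1-q)^{-n} ∑_{l=0}^{n} (-1)^l C(n,l) q^{x l}/(1 + q^l) (with q^{xl} interpreted via rational exponents when x is rational with denominator dividing d), one has for all n ≥ 0 and natural numbers x: E_{n,q}(x) = [d]_q^n · ([2]_q/[2]_{q^d}) · ∑_{a=0}^{d-1} (-1)^a E_{n,q^d}((x + a)/d). -/

import Mathlib

/-- The q-Euler polynomial `E_{n,q}(t)` expressed through the element `qt = q^t`
(which makes sense of rational arguments `t`):
`E_{n,q}(t) = (1+q)(1-q)^{-n} ∑_{l=0}^{n} (-1)^l C(n,l) (q^t)^l/(1+q^l)`. -/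
noncomputable def qEulerPolyAt {K : Type*} [Field K] (q qt : K) (n : ℕ) : K :=
  (1 + q) * ((1 - q)⁻¹) ^ n *
    ∑ l ∈ Finset.range (n + 1), (-1 : K) ^ l * (n.choose l : K) * qt ^ l / (1 + q ^ l)

/-- Distribution relation for q-Euler polynomials: for odd `d > 0`,
`E_{n,q}(x) = [d]_q^n ([2]_q/[2]_{q^d}) ∑_{a=0}^{d-1} (-1)^a E_{n,q^d}((x+a)/d)`,
where `(q^d)^{(x+a)/d} = q^{x+a}`. -/
theorem qEulerPoly_distribution {K : Type*} [Field K] [CharZero K]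
    (q : K) (d : ℕ) (hd : Odd d) (hd0 : 0 < d)
    (hq : q ≠ 1) (hqd : q ^ d ≠ 1) (h : ∀ l : ℕ, 1 + q ^ l ≠ 0) (n x : ℕ) :
    qEulerPolyAt q (q ^ x) n =
      ((1 - q ^ d) / (1 - q)) ^ n * ((1 + q) / (1 + q ^ d)) *
        ∑ a ∈ Finset.range d, (-1 : K) ^ a * qEulerPolyAt (q ^ d) (q ^ (x + a)) n := by
  have hq1 : (1 : K) - q ≠ 0 := sub_ne_zero.mpr fun h' => hq h'.symm
  have hqd1 : (1 : K) - q ^ d ≠ 0 := sub_ne_zero.mpr fun h' => hqd h'.symm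
  have key : ∀ l : ℕ, ∑ a ∈ Finset.range d, (-1 : K) ^ a * (q ^ (x + a)) ^ l
      = (q ^ x) ^ l * (1 + q ^ (d * l)) / (1 + q ^ l) := by
    intro l
    have h1 : (1 : K) + q ^ l ≠ 0 := h l
    have hr : (-(q ^ l) : K) ≠ 1 := by
      intro hc; exact h1 (by linear_combination -hc)
    have hr2 : (-(q ^ l) : K) - 1 ≠ 0 := by
      intro hc; exact h1 (by linear_combination -hc)
    calc ∑ a ∈ Finset.range d, (-1 : K) ^ a * (q ^ (x + a)) ^ l
        = (q ^ x) ^ l * ∑ a ∈ Finset.range d, (-(q ^ l) : K) ^ a := by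
          rw [Finset.mul_sum]
          refine Finset.sum_congr rfl fun a _ => ?_
          have h2 : (-(q ^ l) : K) ^ a = (-1 : K) ^ a * (q ^ a) ^ l := by
            rw [neg_pow, ← pow_mul, ← pow_mul, mul_comm l a]
          rw [h2, pow_add, mul_pow]; ring
      _ = (q ^ x) ^ l * (((-(q ^ l)) ^ d - 1) / ((-(q ^ l)) - 1)) := by
          rw [geom_sum_eq hr d]
      _ = (q ^ x) ^ l * (1 + q ^ (d * l)) / (1 + q ^ l) := by
          rw [hd.neg_pow, show ((q : K) ^ l) ^ d = q ^ (d * l) from by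
            rw [← pow_mul, mul_comm]]
          field_simp
          ring
  have expand : ∑ a ∈ Finset.range d, (-1 : K) ^ a * qEulerPolyAt (q ^ d) (q ^ (x + a)) n
      = (1 + q ^ d) * ((1 - q ^ d)⁻¹) ^ n *
        ∑ l ∈ Finset.range (n + 1),
          (-1 : K) ^ l * (n.choose l : K) * (q ^ x) ^ l / (1 + q ^ l) := by
    unfold qEulerPolyAt
    have step1 : ∀ a ∈ Finset.range d,
        (-1 : K) ^ a * ((1 + q ^ d) * ((1 - q ^ d)⁻¹) ^ n *
          ∑ l ∈ Finset.range (n + 1),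
            (-1 : K) ^ l * (n.choose l : K) * (q ^ (x + a)) ^ l / (1 + (q ^ d) ^ l))
        = (1 + q ^ d) * ((1 - q ^ d)⁻¹) ^ n *
          ∑ l ∈ Finset.range (n + 1),
            (-1 : K) ^ a * ((-1 : K) ^ l * (n.choose l : K) * (q ^ (x + a)) ^ l /
              (1 + (q ^ d) ^ l)) := by
      intro a _
      rw [Finset.mul_sum, Finset.mul_sum, Finset.mul_sum]
      refine Finset.sum_congr rfl fun l _ => ?_
      ring
    rw [Finset.sum_congr rfl step1, ← Finset.mul_sum]
    congr 1
    rw [Finset.sum_comm]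
    refine Finset.sum_congr rfl fun l _ => ?_
    have h1 := h l
    have h2 := h (d * l)
    have hfac : ∑ a ∈ Finset.range d,
        (-1 : K) ^ a * ((-1 : K) ^ l * (n.choose l : K) * (q ^ (x + a)) ^ l / (1 + (q ^ d) ^ l))
        = ((-1 : K) ^ l * (n.choose l : K) / (1 + q ^ (d * l))) *
          ∑ a ∈ Finset.range d, (-1 : K) ^ a * (q ^ (x + a)) ^ l := by
      rw [Finset.mul_sum]
      refine Finset.sum_congr rfl fun a _ => ?_
      rw [← pow_mul]
      ring
    rw [hfac, key l]
    field_simp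
  rw [expand, ← mul_assoc]
  unfold qEulerPolyAt
  have hc : ((1 - q ^ d) / (1 - q)) ^ n * ((1 + q) / (1 + q ^ d)) *
      ((1 + q ^ d) * ((1 - q ^ d)⁻¹) ^ n) = (1 + q) * ((1 - q)⁻¹) ^ n := by
    have e1 : (1 - q ^ d) ^ n * ((1 - q ^ d)⁻¹) ^ n = 1 := by
      rw [← mul_pow, mul_inv_cancel₀ hqd1, one_pow]
    have e2 : (1 + q ^ d) * (1 + q ^ d)⁻¹ = 1 := mul_inv_cancel₀ (h d)
    rw [div_pow]
    linear_combination ((1 + q) * ((1 - q)⁻¹) ^ n * (1 - q ^ d) ^ n * ((1 - q ^ d)⁻¹) ^ n) * e2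
      + ((1 + q) * ((1 - q)⁻¹) ^ n) * e1
  rw [hc]
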